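/- Let β ≥ 1 and 0 < η < min{216/(49β²), 6/(7β)}. Let X ∈ ℝ^{n×p} satisfy ‖XᵀX − I_p‖_F ≤ 1/6, let Y ∈ ℝ^{n×p} satisfy ‖Y‖_F ≤ c for some c > 0, and set X⁺ = X − ηβ·X(XᵀX − I_p) + ηY. Then ‖(X⁺)ᵀX⁺ − I_p‖_F ≤ (1 − (5/6)ηβ)²·‖XᵀX − I_p‖_F + η(1 + 3c) + η²c². -/

import Mathlib

open Matrix BigOperators Finset Kronecker

/- Equip matrix spaces with the Frobenius norm (finite-dimensional, so the resulting calculus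
notions such as `fderiv`/`Differentiable` are norm-independent). -/
attribute [local instance] Matrix.frobeniusNormedAddCommGroup Matrix.frobeniusNormedSpace

/-- The Frobenius norm of a real matrix. -/
noncomputable def frob {m k : Type*} [Fintype m] [Fintype k] (A : Matrix m k ℝ) : ℝ :=
  Real.sqrt (∑ i, ∑ j, (A i j) ^ 2)

/-- The trace inner product ⟨A, B⟩ = tr(AᵀB) of real matrices. -/
noncomputable def minner {m k : Type*} [Fintype m] [Fintype k] (A B : Matrix m k ℝ) : ℝ :=
  (Aᵀ * B).trace

/-- The symmetric part sym(B) = (B + Bᵀ)/2 of a square matrix. -/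
noncomputable def symPart {k : Type*} (B : Matrix k k ℝ) : Matrix k k ℝ :=
  (1 / 2 : ℝ) • (B + Bᵀ)

/-- The generalized Riemannian gradient G(X) = ∇f(X)((3/2)I - (1/2)XᵀX) - X·sym(Xᵀ∇f(X)),
expressed in terms of the Euclidean gradient matrix `Gf = ∇f(X)`. -/
noncomputable def Gdir {n p : ℕ} (Gf X : Matrix (Fin n) (Fin p) ℝ) :
    Matrix (Fin n) (Fin p) ℝ :=
  Gf * ((3 / 2 : ℝ) • (1 : Matrix (Fin p) (Fin p) ℝ) - (1 / 2 : ℝ) • (Xᵀ * X))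
    - X * symPart (Xᵀ * Gf)

/-- The feasibility direction E(X) = X(XᵀX - I). -/
noncomputable def Edir {n p : ℕ} (X : Matrix (Fin n) (Fin p) ℝ) :
    Matrix (Fin n) (Fin p) ℝ :=
  X * (Xᵀ * X - 1)

/-- The spectral norm (largest singular value) of a real matrix, as the operator norm of the
associated Euclidean linear map. -/
noncomputable def specNorm {m k : Type*} [Fintype m] [Fintype k] [DecidableEq k]
    (A : Matrix m k ℝ) : ℝ :=
  ‖LinearMap.toContinuousLinearMap (Matrix.toEuclideanLin A)‖

/-- The smallest singular value of a real matrix: the square root of the smallest eigenvalue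
of AᵀA (= AᴴA over ℝ). -/
noncomputable def sigmaMin {m k : Type*} [Fintype m] [Fintype k] [DecidableEq m] [DecidableEq k]
    (A : Matrix m k ℝ) : ℝ :=
  Real.sqrt (⨅ i, (Matrix.isHermitian_conjTranspose_mul_self A).eigenvalues i)

section aux
variable {m k : Type*} [Fintype m] [Fintype k]

lemma frob_eq_norm (A : Matrix m k ℝ) : frob A = ‖A‖ := by
  rw [Matrix.frobenius_norm_def, frob, Real.sqrt_eq_rpow]
  congr 1
  refine Finset.sum_congr rfl fun i _ => Finset.sum_congr rfl fun j _ => ?_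
  rw [show ((2:ℝ)) = ((2:ℕ):ℝ) by norm_num, Real.rpow_natCast, Real.norm_eq_abs, sq_abs]

lemma frob_nonneg (A : Matrix m k ℝ) : 0 ≤ frob A := Real.sqrt_nonneg _

lemma frob_sq (A : Matrix m k ℝ) : frob A ^ 2 = ∑ i, ∑ j, (A i j)^2 :=
  Real.sq_sqrt (by positivity)

lemma trace_eq_sum (A B : Matrix m k ℝ) : (Aᵀ * B).trace = ∑ i, ∑ j, A i j * B i j := by
  simp only [Matrix.trace, Matrix.diag, Matrix.mul_apply, Matrix.transpose_apply]
  exact Finset.sum_comm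

lemma trace_le (A B : Matrix m k ℝ) : (Aᵀ * B).trace ≤ frob A * frob B := by
  have key := Finset.sum_mul_sq_le_sq_mul_sq Finset.univ
    (fun ij : m × k => A ij.1 ij.2) (fun ij : m × k => B ij.1 ij.2)
  have h1 : (∑ ij : m × k, A ij.1 ij.2 * B ij.1 ij.2) = (Aᵀ * B).trace := by
    rw [trace_eq_sum, Fintype.sum_prod_type]
  have h2 : (∑ ij : m × k, A ij.1 ij.2 ^ 2) = frob A ^ 2 := by
    rw [frob_sq, Fintype.sum_prod_type]
  have h3 : (∑ ij : m × k, B ij.1 ij.2 ^ 2) = frob B ^ 2 := by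
    rw [frob_sq, Fintype.sum_prod_type]
  rw [h1, h2, h3] at key
  have hab : 0 ≤ frob A * frob B := mul_nonneg (frob_nonneg A) (frob_nonneg B)
  nlinarith [key, hab]

lemma frob_transpose (A : Matrix m k ℝ) : frob Aᵀ = frob A := by
  rw [frob_eq_norm, frob_eq_norm, Matrix.frobenius_norm_transpose]

lemma frob_mul_le {l : Type*} [Fintype l] (A : Matrix m l ℝ) (B : Matrix l k ℝ) :
    frob (A * B) ≤ frob A * frob B := by
  rw [frob_eq_norm, frob_eq_norm, frob_eq_norm]
  exact Matrix.frobenius_norm_mul A B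

lemma frob_sq_eq_trace (A : Matrix m k ℝ) : frob A ^ 2 = (Aᵀ * A).trace := by
  rw [frob_sq, trace_eq_sum]; simp [sq]

end aux

lemma Zbound {n p : ℕ} (X Y : Matrix (Fin n) (Fin p) ℝ)
    (hX : frob (Xᵀ * X - 1) ≤ 1 / 6) : frob (Xᵀ * Y) ≤ 13 / 12 * frob Y := by
  set Z := Xᵀ * Y with hZ
  set D := Xᵀ * X - 1 with hD
  have hDD : Xᵀ * X = D + 1 := by rw [hD, sub_add_cancel]
  have h1 : frob Z ^ 2 = (Yᵀ * (X * Z)).trace := by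
    rw [frob_sq_eq_trace, hZ, transpose_mul, transpose_transpose, Matrix.mul_assoc]
  have h2 : (Yᵀ * (X * Z)).trace ≤ frob Y * frob (X * Z) := trace_le _ _
  have h3 : frob (X * Z) ^ 2 = frob Z ^ 2 + (Zᵀ * (D * Z)).trace := by
    rw [frob_sq_eq_trace, frob_sq_eq_trace, transpose_mul, Matrix.mul_assoc,
      ← Matrix.mul_assoc Xᵀ X Z, hDD, Matrix.add_mul, Matrix.one_mul, Matrix.mul_add,
      Matrix.trace_add, add_comm]
  have h4 : (Zᵀ * (D * Z)).trace ≤ frob Z * (frob D * frob Z) :=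
    (trace_le Z (D * Z)).trans
      (mul_le_mul_of_nonneg_left (frob_mul_le D Z) (frob_nonneg Z))
  have hd0 := frob_nonneg D
  have hz0 := frob_nonneg Z
  have hy0 := frob_nonneg Y
  have hf0 := frob_nonneg (X * Z)
  have h5 : frob (X * Z) ^ 2 ≤ 7 / 6 * frob Z ^ 2 := by nlinarith [h3, h4, hX, sq_nonneg (frob Z)]
  have h6 : frob Z ^ 2 ≤ frob Y * frob (X * Z) := by rw [h1]; exact h2
  rcases eq_or_lt_of_le hz0 with hz | hz
  · rw [← hz]; positivity
  · have h7 : (frob Z ^ 2) ^ 2 ≤ (frob Y * frob (X * Z)) ^ 2 :=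
      pow_le_pow_left₀ (sq_nonneg _) h6 2
    have h8 : frob Z ^ 2 ≤ 7 / 6 * frob Y ^ 2 := by nlinarith [h7, h5, sq_nonneg (frob Y), hz]
    nlinarith [h8, hz, hy0]

set_option maxHeartbeats 1000000 in
lemma scalar_final (β η d z y c : ℝ) (hβ : 1 ≤ β) (hη0 : 0 < η)
    (ht67 : η * β < 6 / 7) (htβ : η * β * β ≤ 216 / 49)
    (hd0 : 0 ≤ d) (hd : d ≤ 1 / 6) (hz0 : 0 ≤ z) (hz : z ≤ 13 / 12 * c)
    (hy0 : 0 ≤ y) (hy : y ≤ c) (hc : 0 < c) :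
    |1 - 2 * (η * β)| * d + (2 * (η * β) - (η * β) ^ 2) * (d * d)
      + (η * β) ^ 2 * (d * (d * d)) + η * (2 * z) + (η * β * η) * (2 * (d * z))
      + η ^ 2 * (y * y)
    ≤ (1 - 5 / 6 * η * β) ^ 2 * d + η * (1 + 3 * c) + η ^ 2 * c ^ 2 := by
  have hβ0 : (0 : ℝ) < β := lt_of_lt_of_le one_pos hβ
  set t := η * β with htdef
  have ht0 : 0 < t := mul_pos hη0 hβ0
  have hrw : (1 - 5 / 6 * η * β) ^ 2 = (1 - 5 / 6 * t) ^ 2 := by rw [htdef]; ring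
  rw [hrw]
  -- cross term bound
  have htd : t * d ≤ 1 / 7 := by nlinarith [mul_le_mul ht67.le hd hd0 (by norm_num : (0:ℝ) ≤ 6/7)]
  have hinner : 2 * z + t * (2 * (d * z)) ≤ 3 * c := by
    nlinarith [mul_nonneg (by linarith : (0:ℝ) ≤ 1/7 - t * d) hz0, hz, hc.le]
  have hcross : η * (2 * z) + (t * η) * (2 * (d * z)) ≤ η * (3 * c) := by
    have := mul_le_mul_of_nonneg_left hinner hη0.le
    nlinarith [this]
  -- quadratic term
  have hquad : η ^ 2 * (y * y) ≤ η ^ 2 * c ^ 2 := by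
    have hyy : y * y ≤ c ^ 2 := by nlinarith [mul_le_mul hy hy hy0 hc.le]
    exact mul_le_mul_of_nonneg_left hyy (sq_nonneg η)
  -- main term: |1-2t| d + (2t - t²) d² + t² d³ ≤ (1 - 5/6 t)² d + η
  have hmain : |1 - 2 * t| * d + (2 * t - t ^ 2) * (d * d) + t ^ 2 * (d * (d * d))
      ≤ (1 - 5 / 6 * t) ^ 2 * d + η := by
    have hd36 : d * d ≤ 1 / 36 := by nlinarith
    rcases le_or_gt (2 * t) 1 with h | h
    · rw [abs_of_nonneg (by linarith)]
      have h1 : 0 ≤ d * (1/6 - d) * (t * (2 - t)) :=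
        mul_nonneg (mul_nonneg hd0 (by linarith)) (mul_nonneg ht0.le (by linarith))
      have h2 : 0 ≤ d * (1/36 - d * d) * t ^ 2 :=
        mul_nonneg (mul_nonneg hd0 (by linarith)) (sq_nonneg t)
      linarith [h1, h2, mul_nonneg hd0 (sq_nonneg t), hη0.le]
    · rw [abs_of_nonpos (by linarith)]
      set q := 4 * t - 2 - 5 / 6 * t ^ 2 with hq
      -- B(d) ≤ q
      have hBmono : (2 * t - 1) + (2 * t - t ^ 2) * d + t ^ 2 * (d * d)
          - (1 - 5 / 6 * t) ^ 2 ≤ q := by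
        have h1 : 0 ≤ (1/6 - d) * (t * (2 - t)) :=
          mul_nonneg (by linarith) (mul_nonneg ht0.le (by linarith))
        have h2 : 0 ≤ (1/36 - d * d) * t ^ 2 := mul_nonneg (by linarith) (sq_nonneg t)
        nlinarith [h1, h2]
      rcases le_or_gt q 0 with hq0 | hq0
      · have : d * ((2 * t - 1) + (2 * t - t ^ 2) * d + t ^ 2 * (d * d)
            - (1 - 5 / 6 * t) ^ 2) ≤ 0 :=
          mul_nonpos_of_nonneg_of_nonpos hd0 (hBmono.trans hq0)
        nlinarith [this, hη0.le]
      · -- q > 0 : q ≤ 6η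
        have h79 : 216 / 49 * q ≤ 6 * t ^ 2 := by nlinarith [sq_nonneg (79 * t - 72)]
        have hβtq : β * t * q ≤ 216 / 49 * q := by
          apply mul_le_mul_of_nonneg_right _ hq0.le
          nlinarith [htβ]
        have hβq : β * q ≤ 6 * t := by
          have h' : β * q * t ≤ 6 * t * t := by
            calc β * q * t = β * t * q := by ring
              _ ≤ 216 / 49 * q := hβtq
              _ ≤ 6 * t ^ 2 := h79
              _ = 6 * t * t := by ring
          exact le_of_mul_le_mul_right h' ht0
        have hq6 : q ≤ 6 * η := by
          have h'' : β * q ≤ β * (6 * η) := by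
            calc β * q ≤ 6 * t := hβq
              _ = 6 * (η * β) := by rw [htdef]
              _ = β * (6 * η) := by ring
          exact le_of_mul_le_mul_left h'' hβ0
        have hdB : d * ((2 * t - 1) + (2 * t - t ^ 2) * d + t ^ 2 * (d * d)
            - (1 - 5 / 6 * t) ^ 2) ≤ d * q :=
          mul_le_mul_of_nonneg_left hBmono hd0
        have hdq : d * q ≤ 1 / 6 * q := mul_le_mul_of_nonneg_right hd hq0.le
        nlinarith [hdB, hdq, hq6]
  linarith [hmain, hcross, hquad]

lemma keyId {n p : ℕ} (t η : ℝ) (X Y : Matrix (Fin n) (Fin p) ℝ) :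
    (X - t•(X*(Xᵀ*X - 1)) + η•Y)ᵀ * (X - t•(X*(Xᵀ*X - 1)) + η•Y) - 1
    = (1-2*t)•(Xᵀ*X-1) + (t^2-2*t)•((Xᵀ*X-1)*(Xᵀ*X-1))
      + t^2•((Xᵀ*X-1)*((Xᵀ*X-1)*(Xᵀ*X-1)))
      + η•(Xᵀ*Y + (Xᵀ*Y)ᵀ) + (-(t*η))•((Xᵀ*X-1)*(Xᵀ*Y) + (Xᵀ*Y)ᵀ*(Xᵀ*X-1))
      + (η^2)•(Yᵀ*Y) := by
  simp only [sub_eq_add_neg, neg_smul, neg_add, transpose_add, transpose_neg, transpose_smul,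
    transpose_mul, transpose_one, transpose_transpose,
    Matrix.add_mul, Matrix.mul_add, Matrix.neg_mul, Matrix.mul_neg,
    Matrix.smul_mul, Matrix.mul_smul, smul_smul, smul_add, smul_neg, neg_neg,
    Matrix.mul_one, Matrix.one_mul, Matrix.mul_assoc]
  module

set_option maxHeartbeats 1000000 in
/-- One-step bound on the orthogonality violation. For `β ≥ 1`,
`0 < η < min{216/(49β²), 6/(7β)}`, `‖XᵀX - I‖_F ≤ 1/6`, `‖Y‖_F ≤ c` with `c > 0`, and
`X⁺ = X - ηβX(XᵀX - I) + ηY`, it holds that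
`‖(X⁺)ᵀX⁺ - I‖_F ≤ (1 - (5/6)ηβ)²‖XᵀX - I‖_F + η(1 + 3c) + η²c²`. -/
theorem stmt16 {n p : ℕ} (β : ℝ) (hβ : 1 ≤ β) (η : ℝ) (hη0 : 0 < η)
    (hη : η < min (216 / (49 * β ^ 2)) (6 / (7 * β)))
    (X Y : Matrix (Fin n) (Fin p) ℝ)
    (hX : frob (Xᵀ * X - 1) ≤ 1 / 6)
    (c : ℝ) (hc : 0 < c) (hY : frob Y ≤ c)
    (Xp : Matrix (Fin n) (Fin p) ℝ)
    (hXp : Xp = X - (η * β) • (X * (Xᵀ * X - 1)) + η • Y) :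
    frob (Xpᵀ * Xp - 1)
      ≤ (1 - 5 / 6 * η * β) ^ 2 * frob (Xᵀ * X - 1) + η * (1 + 3 * c) + η ^ 2 * c ^ 2 := by
  have hη1 : η < 216 / (49 * β ^ 2) := lt_of_lt_of_le hη (min_le_left _ _)
  have hη2 : η < 6 / (7 * β) := lt_of_lt_of_le hη (min_le_right _ _)
  have hβ0 : (0 : ℝ) < β := lt_of_lt_of_le one_pos hβ
  have ht0 : 0 < η * β := mul_pos hη0 hβ0
  have ht67 : η * β < 6 / 7 := by
    have h := (lt_div_iff₀ (by positivity : (0:ℝ) < 7 * β)).mp hη2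
    nlinarith [h]
  have htβ : η * β * β ≤ 216 / 49 := by
    have h := (lt_div_iff₀ (by positivity : (0:ℝ) < 49 * β ^ 2)).mp hη1
    nlinarith [h]
  have hd0 := frob_nonneg (Xᵀ * X - 1)
  have hz0 := frob_nonneg (Xᵀ * Y)
  have hy0 := frob_nonneg Y
  have hzb : frob (Xᵀ * Y) ≤ 13 / 12 * c := (Zbound X Y hX).trans (by linarith)
  subst hXp
  rw [keyId (η * β) η X Y]
  set t := η * β with htdef
  set D := Xᵀ * X - 1 with hD
  set Z := Xᵀ * Y with hZ
  have h2t : (0:ℝ) ≤ 2 * t - t ^ 2 := by nlinarith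
  have tri : frob ((1-2*t)•D + (t^2-2*t)•(D*D) + t^2•(D*(D*D))
      + η•(Z + Zᵀ) + (-(t*η))•(D*Z + Zᵀ*D) + (η^2)•(Yᵀ*Y))
      ≤ frob ((1-2*t)•D) + frob ((t^2-2*t)•(D*D)) + frob (t^2•(D*(D*D)))
        + frob (η•(Z + Zᵀ)) + frob ((-(t*η))•(D*Z + Zᵀ*D)) + frob ((η^2)•(Yᵀ*Y)) := by
    simp only [frob_eq_norm]
    calc ‖(1-2*t)•D + (t^2-2*t)•(D*D) + t^2•(D*(D*D)) + η•(Z + Zᵀ)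
          + (-(t*η))•(D*Z + Zᵀ*D) + (η^2)•(Yᵀ*Y)‖
        ≤ ‖(1-2*t)•D + (t^2-2*t)•(D*D) + t^2•(D*(D*D)) + η•(Z + Zᵀ)
          + (-(t*η))•(D*Z + Zᵀ*D)‖ + ‖(η^2)•(Yᵀ*Y)‖ := norm_add_le _ _
      _ ≤ (‖(1-2*t)•D + (t^2-2*t)•(D*D) + t^2•(D*(D*D)) + η•(Z + Zᵀ)‖
          + ‖(-(t*η))•(D*Z + Zᵀ*D)‖) + ‖(η^2)•(Yᵀ*Y)‖ :=
          add_le_add_left (norm_add_le _ _) _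
      _ ≤ ((‖(1-2*t)•D + (t^2-2*t)•(D*D) + t^2•(D*(D*D))‖ + ‖η•(Z + Zᵀ)‖)
          + ‖(-(t*η))•(D*Z + Zᵀ*D)‖) + ‖(η^2)•(Yᵀ*Y)‖ :=
          add_le_add_left (add_le_add_left (norm_add_le _ _) _) _
      _ ≤ (((‖(1-2*t)•D + (t^2-2*t)•(D*D)‖ + ‖t^2•(D*(D*D))‖) + ‖η•(Z + Zᵀ)‖)
          + ‖(-(t*η))•(D*Z + Zᵀ*D)‖) + ‖(η^2)•(Yᵀ*Y)‖ :=
          add_le_add_left (add_le_add_left (add_le_add_left (norm_add_le _ _) _) _) _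
      _ ≤ ((((‖(1-2*t)•D‖ + ‖(t^2-2*t)•(D*D)‖) + ‖t^2•(D*(D*D))‖) + ‖η•(Z + Zᵀ)‖)
          + ‖(-(t*η))•(D*Z + Zᵀ*D)‖) + ‖(η^2)•(Yᵀ*Y)‖ := by
          gcongr
          exact norm_add_le _ _
      _ = _ := by ring
  have B1 : frob ((1-2*t)•D) = |1 - 2*t| * frob D := by
    rw [frob_eq_norm, norm_smul, Real.norm_eq_abs, ← frob_eq_norm]
  have B2 : frob ((t^2-2*t)•(D*D)) ≤ (2*t - t^2) * (frob D * frob D) := by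
    rw [frob_eq_norm, norm_smul, Real.norm_eq_abs, abs_of_nonpos (by nlinarith : t^2 - 2*t ≤ 0),
      ← frob_eq_norm]
    have h := mul_le_mul_of_nonneg_left (frob_mul_le D D) h2t
    linarith [h]
  have B3 : frob (t^2•(D*(D*D))) ≤ t^2 * (frob D * (frob D * frob D)) := by
    rw [frob_eq_norm, norm_smul, Real.norm_eq_abs, abs_of_nonneg (sq_nonneg t), ← frob_eq_norm]
    have h1 : frob (D*(D*D)) ≤ frob D * (frob D * frob D) :=
      (frob_mul_le D (D*D)).trans (mul_le_mul_of_nonneg_left (frob_mul_le D D) hd0)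
    exact mul_le_mul_of_nonneg_left h1 (sq_nonneg t)
  have B4 : frob (η•(Z + Zᵀ)) ≤ η * (2 * frob Z) := by
    rw [frob_eq_norm, norm_smul, Real.norm_eq_abs, abs_of_nonneg hη0.le, ← frob_eq_norm]
    have h1 : frob (Z + Zᵀ) ≤ 2 * frob Z := by
      have h := norm_add_le Z Zᵀ
      rw [Matrix.frobenius_norm_transpose] at h
      rw [frob_eq_norm, frob_eq_norm]
      linarith [h]
    exact mul_le_mul_of_nonneg_left h1 hη0.le
  have B5 : frob ((-(t*η))•(D*Z + Zᵀ*D)) ≤ (t*η) * (2 * (frob D * frob Z)) := by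
    rw [frob_eq_norm, norm_smul, Real.norm_eq_abs, abs_neg,
      abs_of_nonneg (mul_nonneg ht0.le hη0.le), ← frob_eq_norm]
    have h1 : frob (D*Z + Zᵀ*D) ≤ 2 * (frob D * frob Z) := by
      have hadd : frob (D*Z + Zᵀ*D) ≤ frob (D*Z) + frob (Zᵀ*D) := by
        rw [frob_eq_norm, frob_eq_norm, frob_eq_norm]
        exact norm_add_le _ _
      have h3 := frob_mul_le Zᵀ D
      rw [frob_transpose] at h3
      nlinarith [hadd, frob_mul_le D Z, h3]
    exact mul_le_mul_of_nonneg_left h1 (mul_nonneg ht0.le hη0.le)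
  have B6 : frob ((η^2)•(Yᵀ*Y)) ≤ η^2 * (frob Y * frob Y) := by
    rw [frob_eq_norm, norm_smul, Real.norm_eq_abs, abs_of_nonneg (sq_nonneg η), ← frob_eq_norm]
    have h1 := frob_mul_le Yᵀ Y
    rw [frob_transpose] at h1
    exact mul_le_mul_of_nonneg_left h1 (sq_nonneg η)
  have key := scalar_final β η (frob D) (frob Z) (frob Y) c hβ hη0 ht67 htβ hd0 hX hz0 hzb hy0 hY hc
  calc frob ((1-2*t)•D + (t^2-2*t)•(D*D) + t^2•(D*(D*D))
        + η•(Z + Zᵀ) + (-(t*η))•(D*Z + Zᵀ*D) + (η^2)•(Yᵀ*Y))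
      ≤ |1 - 2*(η*β)| * frob D + (2*(η*β) - (η*β)^2) * (frob D * frob D)
        + (η*β)^2 * (frob D * (frob D * frob D))
        + η * (2 * frob Z) + (η*β*η) * (2 * (frob D * frob Z)) + η^2 * (frob Y * frob Y) := by
        rw [← htdef]
        linarith [tri, B1, B2, B3, B4, B5, B6]
    _ ≤ (1 - 5/6*η*β)^2 * frob D + η * (1 + 3*c) + η^2 * c^2 := key
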